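/- The function x ↦ Si(x)/x, where Si(x) = ∫_0^x (sin t)/t dt, is strictly decreasing on the interval (0, π]. -/

import Mathlib

open Real MeasureTheory intervalIntegral

/-- The sine integral `Si x = ∫_0^x (sin t)/t dt`. -/
noncomputable def Si (x : ℝ) : ℝ := ∫ t in (0:ℝ)..x, Real.sin t / t

lemma sin_div_intervalIntegrable (a b : ℝ) :
    IntervalIntegrable (fun t => Real.sin t / t) volume a b := by
  rw [intervalIntegrable_iff]
  apply Measure.integrableOn_of_bounded (M := 1) (measure_Ioc_lt_top.ne)
    ((Real.continuous_sin.measurable.div measurable_id).aestronglyMeasurable)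
  filter_upwards with t
  rcases eq_or_ne t 0 with rfl | ht
  · simp
  · rw [Pi.div_apply, norm_div]
    exact div_le_one_of_le₀ (Real.abs_sin_lt_abs ht).le (abs_nonneg t)

lemma hasDerivAt_Si {x : ℝ} (hx : 0 < x) : HasDerivAt Si (Real.sin x / x) x := by
  apply intervalIntegral.integral_hasDerivAt_right (sin_div_intervalIntegrable 0 x)
    ((Real.continuous_sin.measurable.div measurable_id).stronglyMeasurable.stronglyMeasurableAtFilter)
  exact (Real.continuous_sin.continuousAt).div continuousAt_id hx.ne'

lemma sin_lt_Si {x : ℝ} (hx : 0 < x) (hx' : x ≤ π) : Real.sin x < Si x := by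
  have key : (0:ℝ) < ∫ t in (0:ℝ)..x, (Real.sin t / t - Real.cos t) := by
    apply intervalIntegral.intervalIntegral_pos_of_pos_on
      ((sin_div_intervalIntegrable 0 x).sub (Real.continuous_cos.intervalIntegrable 0 x))
    · intro t ht
      have ht0 : 0 < t := ht.1
      have htpi : t < π := lt_of_lt_of_le ht.2 hx'
      rcases lt_or_ge t (π/2) with h | h
      · have hcos : 0 < Real.cos t := Real.cos_pos_of_mem_Ioo ⟨by linarith [Real.pi_pos], h⟩
        have := Real.lt_tan ht0 h
        rw [Real.tan_eq_sin_div_cos] at this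
        have : t * Real.cos t < Real.sin t := by
          rw [lt_div_iff₀ hcos] at this; linarith
        have : Real.cos t < Real.sin t / t := by
          rw [lt_div_iff₀ ht0]; linarith [this]
        linarith
      · have hcos : Real.cos t ≤ 0 := Real.cos_nonpos_of_pi_div_two_le_of_le h (by linarith)
        have hsin : 0 < Real.sin t := Real.sin_pos_of_pos_of_lt_pi ht0 htpi
        have : 0 < Real.sin t / t := div_pos hsin ht0
        linarith
    · exact hx
  rw [intervalIntegral.integral_sub (sin_div_intervalIntegrable 0 x)
    (Real.continuous_cos.intervalIntegrable 0 x), integral_cos] at key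
  simp only [Real.sin_zero, sub_zero] at key
  unfold Si
  linarith

theorem Si_div_strictAnti : StrictAntiOn (fun x : ℝ => Si x / x) (Set.Ioc 0 π) := by
  apply strictAntiOn_of_deriv_neg (convex_Ioc 0 π)
  · intro x hx
    exact (((hasDerivAt_Si hx.1).div (hasDerivAt_id x) hx.1.ne').continuousAt).continuousWithinAt
  · rw [interior_Ioc]
    intro x hx
    have hx0 : 0 < x := hx.1
    have hd : HasDerivAt (fun x : ℝ => Si x / x) ((Real.sin x / x * x - Si x * 1) / x ^ 2) x :=
      (hasDerivAt_Si hx0).div (hasDerivAt_id x) hx0.ne'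
    rw [hd.deriv]
    have hlt := sin_lt_Si hx0 hx.2.le
    have hnum : Real.sin x / x * x - Si x * 1 < 0 := by
      rw [div_mul_cancel₀ _ hx0.ne']; linarith
    exact div_neg_of_neg_of_pos hnum (by positivity)
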